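/- Let σ, μ ∈ ℝ satisfy e^{2πμ} > sinh²(2πσ), and set t₀ := (1/(2π))·Log(−cosh(2πσ) − i√(e^{2πμ} − sinh²(2πσ))) (principal logarithm, positive real square root). Then −1/2 < Im t₀ < −1/4 and t₀ satisfies Log(1 + e^{2π(t₀−σ)}) + Log(1 + e^{2π(t₀+σ)}) = 2πμ − πi; moreover, t₀ is the unique t ∈ ℂ with −1/2 < Im t < −1/4 satisfying Log(1 + e^{2π(t−σ)}) + Log(1 + e^{2π(t+σ)}) = 2πμ − πi. -/

import Mathlib

open MeasureTheory

noncomputable section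

/-- The dilogarithm `Li₂(z) = -∫₀¹ Log(1 - t z) dt / t` (principal branch of `Log`). -/
def Li2 (z : ℂ) : ℂ := -∫ t in (0:ℝ)..1, Complex.log (1 - (t:ℂ) * z) / (t:ℂ)

/-- Negative-index polylogarithms: `LiNeg m = Li_{-m}`, with `Li₀(w) = w/(1-w)` and
`Li_{-m}(w) = w ⬝ d/dw Li_{-m+1}(w)`. -/
def LiNeg : ℕ → ℂ → ℂ
  | 0 => fun w => w / (1 - w)
  | (m+1) => fun w => w * deriv (LiNeg m) w

/-- `LiIdx n = Li_{2-2n}`: the dilogarithm for `n = 0`, and `Li_{-(2n-2)}` for `n ≥ 1`. -/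
def LiIdx (n : ℕ) : ℂ → ℂ := if n = 0 then Li2 else LiNeg (2*n - 2)

/-- `L_b(z) = i ∫₀^∞ ( sin(2yz)/(2 sinh(y/b) sinh(by)) - z/y ) dy/y`. -/
def Lb (b : ℝ) (z : ℂ) : ℂ :=
  Complex.I * ∫ y in Set.Ioi (0:ℝ),
    (Complex.sin (2 * (y:ℂ) * z) / (2 * (Real.sinh (y / b) : ℂ) * (Real.sinh (b * y) : ℂ))
      - z / (y:ℂ)) / (y:ℂ)

/-- Ruijsenaars' hyperbolic gamma function `s_b(z) = exp(L_b(z))`. -/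
def sb (b : ℝ) (z : ℂ) : ℂ := Complex.exp (Lb b z)

/-- `Q = b + b⁻¹` as a complex number. -/
def Qb (b : ℝ) : ℂ := (b:ℂ) + (b:ℂ)⁻¹

/-- The function `𝓜(b, ζ', ω')`, the contour being the horizontal line `Im = -Q/4`. -/
def Mfun (b : ℝ) (ζ : ℝ) (ω : ℂ) : ℂ :=
  sb b ζ * ∫ x : ℝ,
    Complex.exp (Complex.I * (Real.pi:ℂ) * ((x:ℂ) - Complex.I * Qb b / 4)
        * ((ζ:ℂ) - Complex.I * Qb b / 2 + 2 * ω)) *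
      sb b ((x:ℂ) - Complex.I * Qb b / 4 - (ζ:ℂ))
        / sb b ((x:ℂ) - Complex.I * Qb b / 4 + Complex.I * Qb b / 2)

/-- The exponent `f_𝓜(ζ, ω)`. -/
def fM (ζ : ℝ) (ω : ℂ) : ℂ :=
  -(Li2 (-Complex.exp (2 * (Real.pi:ℂ) * (ζ:ℂ)))
    + Li2 (-(Complex.exp (-((Real.pi:ℂ) * (ζ:ℂ))) * Complex.cosh ((Real.pi:ℂ) * ω)
        / Complex.sinh ((Real.pi:ℂ) * ((ζ:ℂ) + ω))))
    - Li2 (Complex.exp ((Real.pi:ℂ) * (ζ:ℂ)) * Complex.cosh ((Real.pi:ℂ) * ω)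
        / Complex.sinh ((Real.pi:ℂ) * ((ζ:ℂ) + ω))))
    / (2 * (Real.pi:ℂ) * Complex.I)
  + Complex.I * (Real.pi:ℂ) * (ζ:ℂ)^2
  + Complex.I * (ω - Complex.I / 2) *
      Complex.log (Complex.exp ((Real.pi:ℂ) * (ζ:ℂ)) * Complex.cosh ((Real.pi:ℂ) * ω)
        / Complex.sinh ((Real.pi:ℂ) * ((ζ:ℂ) + ω)))
  + Complex.I * (Real.pi:ℂ) / 6

/-- The function `𝓠(b, σ', μ')`, the contour being the horizontal line `Im = -3Q/8`. -/
def Qfun (b : ℝ) (σ μ : ℝ) : ℂ :=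
  Complex.exp (Complex.I * (Real.pi:ℂ) *
      (1/6 + 7 * (Qb b)^2 / 24 - (μ:ℂ)^2/2 + Complex.I * (μ:ℂ) * Qb b - (σ:ℂ)^2)) * sb b μ *
  ∫ x : ℝ,
    Complex.exp (-(Complex.I * (Real.pi:ℂ) * ((x:ℂ) - 3 * Complex.I * Qb b / 8)^2)) *
    Complex.exp (2 * Complex.I * (Real.pi:ℂ) * ((x:ℂ) - 3 * Complex.I * Qb b / 8)
      * ((μ:ℂ) - Complex.I * Qb b / 2)) *
    sb b ((x:ℂ) - 3 * Complex.I * Qb b / 8 + (σ:ℂ)) *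
    sb b ((x:ℂ) - 3 * Complex.I * Qb b / 8 - (σ:ℂ))

/-- The exponent `f_𝓠(σ, μ)`. -/
def fQ (σ μ : ℝ) : ℂ :=
  -(Li2 (-Complex.exp (2 * (Real.pi:ℂ) * (μ:ℂ)))) / (2 * (Real.pi:ℂ) * Complex.I)
  - Li2 (Complex.exp (-(2 * (Real.pi:ℂ) * (σ:ℂ))) *
      ((Real.cosh (2*Real.pi*σ) : ℂ) + Complex.I *
        (Real.sqrt (Real.exp (2*Real.pi*μ) - Real.sinh (2*Real.pi*σ)^2) : ℂ)))
    / (2 * (Real.pi:ℂ) * Complex.I)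
  - Li2 (Complex.exp (2 * (Real.pi:ℂ) * (σ:ℂ)) *
      ((Real.cosh (2*Real.pi*σ) : ℂ) + Complex.I *
        (Real.sqrt (Real.exp (2*Real.pi*μ) - Real.sinh (2*Real.pi*σ)^2) : ℂ)))
    / (2 * (Real.pi:ℂ) * Complex.I)
  + (1/2 + Complex.I * (μ:ℂ)) *
      Complex.log (-(Real.cosh (2*Real.pi*σ) : ℂ) - Complex.I *
        (Real.sqrt (Real.exp (2*Real.pi*μ) - Real.sinh (2*Real.pi*σ)^2) : ℂ))
  - (Real.pi:ℂ) * (μ:ℂ) + 5 * (Real.pi:ℂ) * Complex.I / 12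

/-- The phase function `f(t)` of the saddle point analysis of `𝓜`. -/
def fMt (ζ : ℝ) (ω t : ℂ) : ℂ :=
  -(Li2 (-Complex.exp (2*(Real.pi:ℂ)*(ζ:ℂ)))
    + Li2 (-Complex.exp (2*(Real.pi:ℂ)*(t-(ζ:ℂ))))
    - Li2 (-Complex.exp (2*(Real.pi:ℂ)*(t+Complex.I/2)))) / (2*(Real.pi:ℂ)*Complex.I)
  + Complex.I*(Real.pi:ℂ)*(ζ:ℂ)^2 + 2*Complex.I*(Real.pi:ℂ)*t*ω + (Real.pi:ℂ)*t
  + Complex.I*(Real.pi:ℂ)/6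

/-- The amplitude `g(t)` of the saddle point analysis of `𝓜`. -/
def gM (t : ℂ) : ℂ :=
  Complex.exp ((Real.pi:ℂ)*t - Complex.log (1 - Complex.exp (2*(Real.pi:ℂ)*t)) / 2)

/-- The error term `E(τ, t)` from the semiclassical analysis of `𝓜`. -/
def Efun (ζ τ : ℝ) (t : ℂ) : ℂ :=
  Complex.I * (Li2 (Complex.exp (2*(Real.pi:ℂ)*t))
      - Li2 (Complex.exp (Complex.I*(Real.pi:ℂ)*(τ:ℂ) + 2*(Real.pi:ℂ)*t))) / (2*(Real.pi:ℂ)*(τ:ℂ))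
  + Complex.log (1 - Complex.exp (2*(Real.pi:ℂ)*t)) / 2
  + (Complex.I*(Real.pi:ℂ)*(τ:ℂ)/12) *
      (Complex.exp (2*(Real.pi:ℂ)*t + Complex.I*(Real.pi:ℂ)*(τ:ℂ))
          / (Complex.exp (2*(Real.pi:ℂ)*t + Complex.I*(Real.pi:ℂ)*(τ:ℂ)) - 1)
        - Complex.exp (2*(Real.pi:ℂ)*(ζ:ℂ)) / (Complex.exp (2*(Real.pi:ℂ)*(ζ:ℂ)) + 1)
        - Complex.exp (2*(Real.pi:ℂ)*t)
          / (Complex.exp (2*(Real.pi:ℂ)*(ζ:ℂ)) + Complex.exp (2*(Real.pi:ℂ)*t)) + 2)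

/-- The phase function `f(t)` of the saddle point analysis of `𝓠`. -/
def fQt (σ μ : ℝ) (t : ℂ) : ℂ :=
  -(Li2 (-Complex.exp (2*(Real.pi:ℂ)*(μ:ℂ)))
    + Li2 (-Complex.exp (2*(Real.pi:ℂ)*(t-(σ:ℂ))))
    + Li2 (-Complex.exp (2*(Real.pi:ℂ)*(t+(σ:ℂ))))) / (2*(Real.pi:ℂ)*Complex.I)
  + 2*Complex.I*(Real.pi:ℂ)*(μ:ℂ)*t + (Real.pi:ℂ)*(t-(μ:ℂ)) + 5*Complex.I*(Real.pi:ℂ)/12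

/-- The amplitude `g(t)` of the saddle point analysis of `𝓠`. -/
def gQ (μ : ℝ) (t : ℂ) : ℂ := Complex.exp ((Real.pi:ℂ)*(t-(μ:ℂ)))

end

open Complex in
lemma aux_log_add_log {a b z : ℂ} (ha : a.im < 0) (hb : b.im < 0)
    (hz : z.im = -Real.pi) (hab : a * b = Complex.exp z) :
    Complex.log a + Complex.log b = z := by
  have hπ : (0:ℝ) < Real.pi := Real.pi_pos
  have ha0 : a ≠ 0 := fun h0 => by simp [h0] at ha
  have hb0 : b ≠ 0 := fun h0 => by simp [h0] at hb
  have hexp : Complex.exp (Complex.log a + Complex.log b) = Complex.exp z := by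
    rw [Complex.exp_add, Complex.exp_log ha0, Complex.exp_log hb0, hab]
  obtain ⟨n, hn⟩ := Complex.exp_eq_exp_iff_exists_int.mp hexp
  have him := congrArg Complex.im hn
  simp [Complex.log_im, hz] at him
  have haa : -Real.pi < a.arg := Complex.neg_pi_lt_arg a
  have hab' : -Real.pi < b.arg := Complex.neg_pi_lt_arg b
  have ha1 : a.arg < 0 := Complex.arg_neg_iff.mpr ha
  have hb1 : b.arg < 0 := Complex.arg_neg_iff.mpr hb
  have hn0 : n = 0 := by
    have h1 : (-1:ℝ) < (n:ℝ) := by nlinarith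
    have h2 : ((n:ℝ)) < 1 := by nlinarith
    exact_mod_cast (by omega : ∀ m : ℤ, (-1:ℤ) < m → m < 1 → m = 0) n
      (by exact_mod_cast h1) (by exact_mod_cast h2)
  rw [hn, hn0] ; simp


set_option maxHeartbeats 2000000 in
/-- the unique saddle point of the phase function of `𝓠`
in the strip `-1/2 < Im t < -1/4`. -/
theorem Q_saddle_point (σ μ : ℝ)
    (h : Real.sinh (2*Real.pi*σ)^2 < Real.exp (2*Real.pi*μ))
    (t₀ : ℂ)
    (ht₀ : t₀ = (1/(2*(Real.pi:ℂ))) *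
      Complex.log (-(Real.cosh (2*Real.pi*σ) : ℂ) - Complex.I *
        (Real.sqrt (Real.exp (2*Real.pi*μ) - Real.sinh (2*Real.pi*σ)^2) : ℂ))) :
    (-1/2 < t₀.im ∧ t₀.im < -1/4) ∧
    (Complex.log (1 + Complex.exp (2*(Real.pi:ℂ)*(t₀-(σ:ℂ))))
      + Complex.log (1 + Complex.exp (2*(Real.pi:ℂ)*(t₀+(σ:ℂ))))
      = 2*(Real.pi:ℂ)*(μ:ℂ) - (Real.pi:ℂ)*Complex.I) ∧
    (∀ t : ℂ, -1/2 < t.im → t.im < -1/4 →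
      Complex.log (1 + Complex.exp (2*(Real.pi:ℂ)*(t-(σ:ℂ))))
        + Complex.log (1 + Complex.exp (2*(Real.pi:ℂ)*(t+(σ:ℂ))))
        = 2*(Real.pi:ℂ)*(μ:ℂ) - (Real.pi:ℂ)*Complex.I → t = t₀) := by
  have hπ : (0:ℝ) < Real.pi := Real.pi_pos
  have hπC : (Real.pi : ℂ) ≠ 0 := by exact_mod_cast hπ.ne'
  set c : ℝ := Real.cosh (2*Real.pi*σ) with hc
  set s : ℝ := Real.sinh (2*Real.pi*σ) with hs
  set E : ℝ := Real.exp (2*Real.pi*μ) with hE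
  set S : ℝ := Real.sqrt (E - s^2) with hSdef
  have hE0 : (0:ℝ) < E := Real.exp_pos _
  have hdiff : (0:ℝ) < E - s^2 := by linarith
  have hSpos : 0 < S := Real.sqrt_pos.mpr hdiff
  have hS2 : S^2 = E - s^2 := Real.sq_sqrt hdiff.le
  have hcs : c^2 - s^2 = 1 := Real.cosh_sq_sub_sinh_sq _
  have hc1 : 1 ≤ c := Real.one_le_cosh _
  set w : ℂ := -(c:ℂ) - Complex.I * (S:ℂ) with hw
  have hwre : w.re = -c := by simp [hw]
  have hwim : w.im = -S := by simp [hw]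
  have hw0 : w ≠ 0 := by
    intro h0
    rw [h0] at hwim
    simp at hwim
    linarith
  -- arg of w
  have hargw : w.arg = Real.arcsin ((-w).im / ‖w‖) - Real.pi :=
    Complex.arg_of_re_neg_of_im_neg (by rw [hwre]; linarith) (by rw [hwim]; linarith)
  have habs_sq : (‖w‖)^2 = c^2 + S^2 := by
    rw [Complex.sq_norm, Complex.normSq_apply, hwre, hwim]; ring
  have habs_pos : 0 < ‖w‖ := norm_pos_iff.mpr hw0
  have hSabs : S < ‖w‖ := by
    apply lt_of_pow_lt_pow_left₀ 2 habs_pos.le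
    nlinarith
  have hratio1 : 0 < (-w).im / ‖w‖ := by
    rw [Complex.neg_im, hwim, neg_neg]
    positivity
  have hratio2 : (-w).im / ‖w‖ < 1 := by
    rw [Complex.neg_im, hwim, neg_neg, div_lt_one habs_pos]
    exact hSabs
  have harct1 : 0 < Real.arcsin ((-w).im / ‖w‖) := Real.arcsin_pos.mpr hratio1
  have harct2 : Real.arcsin ((-w).im / ‖w‖) < Real.pi / 2 :=
    Real.arcsin_lt_pi_div_two.mpr hratio2
  have hargw1 : -Real.pi < w.arg := Complex.neg_pi_lt_arg w
  have hargw2 : w.arg < -(Real.pi/2) := by rw [hargw]; linarith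
  -- imaginary part of t₀
  have him_t₀ : t₀.im = w.arg / (2*Real.pi) := by
    rw [ht₀, show (1/(2*(Real.pi:ℂ))) = ((1/(2*Real.pi) : ℝ) : ℂ) by push_cast; ring]
    rw [Complex.mul_im]
    simp [Complex.log_im]
    ring
  have hstrip : -1/2 < t₀.im ∧ t₀.im < -1/4 := by
    constructor
    · rw [him_t₀, div_lt_div_iff₀ (by norm_num) (by positivity)]
      linarith
    · rw [him_t₀, div_lt_div_iff₀ (by positivity) (by norm_num)]
      linarith
  -- exp(2π t₀) = w
  have h2pt : 2*(Real.pi:ℂ)*t₀ = Complex.log w := by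
    rw [ht₀]; field_simp
  have hu0 : Complex.exp (2*(Real.pi:ℂ)*t₀) = w := by
    rw [h2pt, Complex.exp_log hw0]
  -- key quadratic identity
  have hS2C : (S:ℂ)^2 = (E:ℂ) - (s:ℂ)^2 := by exact_mod_cast hS2
  have hcsC : (c:ℂ)^2 - (s:ℂ)^2 = 1 := by exact_mod_cast hcs
  have key : w^2 + 2*(c:ℂ)*w + 1 = -(E:ℂ) := by
    rw [hw]
    linear_combination (S:ℂ)^2 * Complex.I_sq - hS2C - hcsC
  -- real exponentials
  set rA : ℝ := Real.exp (-(2*Real.pi*σ)) with hrA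
  set rB : ℝ := Real.exp (2*Real.pi*σ) with hrB
  have hrArB : (rA:ℂ) * (rB:ℂ) = 1 := by
    rw [← Complex.ofReal_mul]
    norm_cast
    rw [hrA, hrB, ← Real.exp_add]
    simp
  have hrAB : (rA:ℂ) + (rB:ℂ) = 2*(c:ℂ) := by
    rw [← Complex.ofReal_add]
    norm_cast
    rw [hc, Real.cosh_eq, hrA, hrB]
    ring
  have hrApos : 0 < rA := Real.exp_pos _
  have hrBpos : 0 < rB := Real.exp_pos _
  have hexpA : ∀ t : ℂ, Complex.exp (2*(Real.pi:ℂ)*(t-(σ:ℂ)))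
      = Complex.exp (2*(Real.pi:ℂ)*t) * (rA:ℂ) := by
    intro t
    rw [show 2*(Real.pi:ℂ)*(t-(σ:ℂ)) = 2*(Real.pi:ℂ)*t + ((-(2*Real.pi*σ):ℝ):ℂ) by
      push_cast; ring, Complex.exp_add, Complex.ofReal_exp]
  have hexpB : ∀ t : ℂ, Complex.exp (2*(Real.pi:ℂ)*(t+(σ:ℂ)))
      = Complex.exp (2*(Real.pi:ℂ)*t) * (rB:ℂ) := by
    intro t
    rw [show 2*(Real.pi:ℂ)*(t+(σ:ℂ)) = 2*(Real.pi:ℂ)*t + (((2*Real.pi*σ):ℝ):ℂ) by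
      push_cast; ring, Complex.exp_add, Complex.ofReal_exp]
  -- the RHS constant
  set z : ℂ := 2*(Real.pi:ℂ)*(μ:ℂ) - (Real.pi:ℂ)*Complex.I with hz
  have hzim : z.im = -Real.pi := by simp [hz]
  have hexpz : Complex.exp z = -(E:ℂ) := by
    rw [hz, Complex.exp_sub, Complex.exp_pi_mul_I,
      show 2*(Real.pi:ℂ)*(μ:ℂ) = ((2*Real.pi*μ : ℝ):ℂ) by push_cast; ring,
      ← Complex.ofReal_exp, ← hE]
    ring
  -- part 2
  have hprod : (1 + w * (rA:ℂ)) * (1 + w * (rB:ℂ)) = Complex.exp z := by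
    rw [hexpz]
    linear_combination w^2 * hrArB + w * hrAB + key
  have hAim : (1 + w * (rA:ℂ)).im < 0 := by
    simp [Complex.add_im, Complex.mul_im, hwim]
    nlinarith
  have hBim : (1 + w * (rB:ℂ)).im < 0 := by
    simp [Complex.add_im, Complex.mul_im, hwim]
    nlinarith
  have part2 : Complex.log (1 + Complex.exp (2*(Real.pi:ℂ)*(t₀-(σ:ℂ))))
      + Complex.log (1 + Complex.exp (2*(Real.pi:ℂ)*(t₀+(σ:ℂ)))) = z := by
    rw [hexpA, hexpB, hu0]
    exact aux_log_add_log hAim hBim hzim hprod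
  refine ⟨hstrip, part2, ?_⟩
  -- uniqueness
  intro t ht1 ht2 heq
  set u : ℂ := Complex.exp (2*(Real.pi:ℂ)*t) with hudef
  have huim : u.im < 0 := by
    rw [hudef, Complex.exp_im]
    have h1 : (2*(Real.pi:ℂ)*t).im = 2*Real.pi*t.im := by simp
    rw [h1]
    have hneg : 2*Real.pi*t.im < 0 := by nlinarith
    have hgt : -Real.pi < 2*Real.pi*t.im := by nlinarith
    have h3 := Real.sin_neg_of_neg_of_neg_pi_lt hneg hgt
    have h4 := Real.exp_pos (2*(Real.pi:ℂ)*t).re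
    nlinarith
  have hA'im : (1 + u * (rA:ℂ)).im < 0 := by
    simp [Complex.add_im, Complex.mul_im]
    nlinarith
  have hB'im : (1 + u * (rB:ℂ)).im < 0 := by
    simp [Complex.add_im, Complex.mul_im]
    nlinarith
  have hA'0 : (1 + u * (rA:ℂ)) ≠ 0 := fun h0 => by simp [h0] at hA'im
  have hB'0 : (1 + u * (rB:ℂ)) ≠ 0 := fun h0 => by simp [h0] at hB'im
  rw [hexpA, hexpB, ← hudef] at heq
  have hprod' : (1 + u * (rA:ℂ)) * (1 + u * (rB:ℂ)) = Complex.exp z := by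
    have h5 := congrArg Complex.exp heq
    rwa [Complex.exp_add, Complex.exp_log hA'0, Complex.exp_log hB'0] at h5
  have hquad : (u - w) * (u + (c:ℂ) - Complex.I * (S:ℂ)) = 0 := by
    rw [hexpz] at hprod'
    rw [hw]
    linear_combination hprod' - u^2 * hrArB - u * hrAB + hcsC + hS2C
      - (S:ℂ)^2 * Complex.I_sq
  have huw : u = w := by
    rcases mul_eq_zero.mp hquad with h1 | h1
    · exact sub_eq_zero.mp h1
    · exfalso
      have h6 : u = -(c:ℂ) + Complex.I * (S:ℂ) := by linear_combination h1
      have h7 : u.im = S := by rw [h6]; simp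
      rw [h7] at huim; linarith
  have hexp_eq : Complex.exp (2*(Real.pi:ℂ)*t) = Complex.exp (2*(Real.pi:ℂ)*t₀) := by
    rw [← hudef, huw, hu0]
  obtain ⟨n, hn⟩ := Complex.exp_eq_exp_iff_exists_int.mp hexp_eq
  have h2π0 : (2*(Real.pi:ℂ)) ≠ 0 := by
    simp [hπC]
  have htt : t = t₀ + (n:ℂ) * Complex.I := by
    apply mul_left_cancel₀ h2π0
    rw [hn]; ring
  have htim : t.im = t₀.im + (n:ℝ) := by
    rw [htt]; simp
  have hn0 : n = 0 := by
    have h8 : (n:ℝ) < 1 := by rw [htim] at ht2; rcases hstrip with ⟨a, b⟩; linarith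
    have h9 : (-1:ℝ) < (n:ℝ) := by rw [htim] at ht1; rcases hstrip with ⟨a, b⟩; linarith
    exact_mod_cast (by omega : ∀ m : ℤ, (-1:ℤ) < m → m < 1 → m = 0) n
      (by exact_mod_cast h9) (by exact_mod_cast h8)
  rw [htt, hn0]; simp
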